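/- Let F be a field of characteristic 2, I an infinite index set with distinct distinguished elements i₀, i₁, V an F-vector space with basis (e_i)_{i∈I}, η_i ∈ V* the coordinate functionals, V' = span{η_i : i ∈ I}, V̄' = V ⊕ V', q(a,α) = α(a), u_i = (e_i, η_i) and U₀₁ = span{u_i + u_j : i, j ∈ I \ {i₀, i₁}}. Then for every subspace W of V̄' that is maximal among the totally q-singular subspaces of V̄' and contains U₀₁, there is no totally q-singular subspace X of V̄' with W ∩ X = 0 and W + X = V̄'. (That is, none of the generators of the quadric S_{q'} containing [U₀₁] admits a complement in S_{q'}.) -/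

import Mathlib

/-- `V̄' = V ⊕ V'` inside `V ⊕ V*`, where `V'` is the span of the coordinate
functionals of the basis `b`. -/
def VbarSub {F I V : Type*} [Field F] [AddCommGroup V] [Module F V]
    (b : Module.Basis I F V) : Submodule F (V × Module.Dual F V) :=
  (⊤ : Submodule F V).prod (Submodule.span F (Set.range b.coord))

/-- `U₀₁ = span { u_i + u_j : i, j ∈ I \ {i₀, i₁} }`, where `u_i = (e_i, η_i)`. -/
def U01 {F I V : Type*} [Field F] [AddCommGroup V] [Module F V]
    (b : Module.Basis I F V) (i₀ i₁ : I) : Submodule F (V × Module.Dual F V) :=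
  Submodule.span F {w : V × Module.Dual F V |
    ∃ i j : I, i ≠ i₀ ∧ i ≠ i₁ ∧ j ≠ i₀ ∧ j ≠ i₁ ∧
      w = ((b i, b.coord i) : V × Module.Dual F V) + (b j, b.coord j)}

/-- A generator of the quadric `S_{q'}`: a subspace of `V̄'` maximal among the
totally `q`-singular subspaces of `V̄'`, where `q(a,α) = α(a)`. -/
def QGenIn {F I V : Type*} [Field F] [AddCommGroup V] [Module F V]
    (b : Module.Basis I F V) (W : Submodule F (V × Module.Dual F V)) : Prop :=
  W ≤ VbarSub b ∧ (∀ w ∈ W, (w.2 w.1 : F) = 0) ∧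
    ∀ W' : Submodule F (V × Module.Dual F V),
      W' ≤ VbarSub b → (∀ w ∈ W', (w.2 w.1 : F) = 0) → W ≤ W' → W' = W

lemma fin_eval_stmt19 {F I V : Type*} [Field F] [AddCommGroup V] [Module F V]
    (b : Module.Basis I F V) {α : Module.Dual F V}
    (hα : α ∈ Submodule.span F (Set.range b.coord)) :
    {i : I | α (b i) ≠ 0}.Finite := by
  induction hα using Submodule.span_induction with
  | mem y hy =>
    obtain ⟨j, rfl⟩ := hy
    refine (Set.finite_singleton j).subset fun i hi => ?_
    simp only [Set.mem_setOf_eq, Module.Basis.coord_apply, Module.Basis.repr_self] at hi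
    by_contra h
    exact hi (Finsupp.single_eq_of_ne' (fun hji => h (hji ▸ rfl)))
  | zero => simp
  | add y z _ _ hy hz =>
    refine (hy.union hz).subset fun i hi => ?_
    by_contra h
    simp only [Set.mem_union, Set.mem_setOf_eq, not_or, not_not] at h
    simp [Set.mem_setOf_eq, h.1, h.2] at hi
  | smul c y _ hy =>
    refine hy.subset fun i hi => ?_
    simp only [Set.mem_setOf_eq, LinearMap.smul_apply, smul_eq_mul] at hi ⊢
    exact fun h => hi (by simp [h])

/-- No generator of the quadric `S_{q'}` containing `U₀₁` admits a complement
in `S_{q'}`. -/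
theorem stmt_19 {F : Type*} [Field F] [CharP F 2]
    {I : Type*} [Infinite I]
    {V : Type*} [AddCommGroup V] [Module F V]
    (b : Module.Basis I F V) (i₀ i₁ : I) (h01 : i₀ ≠ i₁)
    (W : Submodule F (V × Module.Dual F V))
    (hW : QGenIn b W) (hU : U01 b i₀ i₁ ≤ W) :
    ¬ ∃ X : Submodule F (V × Module.Dual F V),
        X ≤ VbarSub b ∧ (∀ w ∈ X, (w.2 w.1 : F) = 0) ∧
        W ⊓ X = ⊥ ∧ W ⊔ X = VbarSub b := by
  rintro ⟨X, hXle, hXsing, -, hSup⟩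
  -- the vectors u i = (e i, η i)
  set u : I → V × Module.Dual F V := fun i => (b i, b.coord i) with hu_def
  have hu : ∀ i, u i ∈ VbarSub b := fun i =>
    ⟨trivial, Submodule.subset_span ⟨i, rfl⟩⟩
  -- pick k ∉ {i₀, i₁}
  obtain ⟨k, hk⟩ :=
    (((Set.finite_singleton i₁).insert i₀).infinite_compl).nonempty
  have hk0 : k ≠ i₀ := fun h => hk (by simp [h])
  have hk1 : k ≠ i₁ := fun h => hk (by simp [h])
  -- decompose u k = w + x with w ∈ W, x ∈ X
  have hmem : u k ∈ W ⊔ X := by rw [hSup]; exact hu k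
  obtain ⟨w, hw, x, hx, hwx⟩ := Submodule.mem_sup.mp hmem
  -- x has "finite support"
  have hx2 : x.2 ∈ Submodule.span F (Set.range b.coord) := (hXle hx).2
  have hfin1 : {i : I | x.2 (b i) ≠ 0}.Finite := fin_eval_stmt19 b hx2
  have hfin2 : {i : I | b.coord i x.1 ≠ 0}.Finite := by
    refine Set.Finite.subset (b.repr x.1).finite_support fun i hi => ?_
    simpa [Finsupp.mem_support_iff, Module.Basis.coord_apply] using hi
  -- pick i outside all the finitely many bad indices
  have hbad : (({i₀} ∪ {i₁} : Set I) ∪ ({i : I | x.2 (b i) ≠ 0}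
      ∪ {i : I | b.coord i x.1 ≠ 0})).Finite :=
    (((Set.finite_singleton i₀).union (Set.finite_singleton i₁)).union
      (hfin1.union hfin2))
  obtain ⟨i, hi⟩ := hbad.infinite_compl.nonempty
  simp only [Set.mem_compl_iff, Set.mem_union, Set.mem_singleton_iff,
    Set.mem_setOf_eq, not_or, not_not] at hi
  obtain ⟨⟨hi0, hi1⟩, hxe, hcx⟩ := hi
  -- u i + u k ∈ U₀₁ ≤ W
  have hik : u i + u k ∈ W :=
    hU (Submodule.subset_span ⟨i, k, hi0, hi1, hk0, hk1, rfl⟩)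
  -- hence u i + x = (u i + u k) - w ∈ W
  have h1 : u i + x ∈ W := by
    have := W.sub_mem hik hw
    have heq : u i + u k - w = u i + x := by rw [← hwx]; abel
    rwa [heq] at this
  -- total singularity of W on u i + x yields 1 = 0
  have h2 := hW.2.1 _ h1
  have h3 := hXsing x hx
  simp only [hu_def, Prod.fst_add, Prod.snd_add, LinearMap.add_apply, map_add,
    Module.Basis.coord_apply, Module.Basis.repr_self, Finsupp.single_eq_same, h3, hxe, hcx] at h2
  simp at h2
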